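/- Let G have maximum degree Δ ≥ 3 and suppose a polymer model (C(G), w) with q spins satisfies the polymer sampling condition w_γ ≤ e^{−τ|γ|} for all γ ∈ C(G), with constant τ ≥ 5 + 3·log((q−1)Δ). Set r = τ − 2 − log((q−1)Δ). Then for every vertex v, Σ_{γ ∈ C(G), v ∈ γ} w_γ · e^{r|γ|} < 1. -/

import Mathlib

open Finset

attribute [local instance] Classical.propDecidable

/-- A polymer in a subset polymer model: a nonempty connected set of vertices together with
an assignment of non-ground-state spins to its vertices. -/
structure Polymer {V : Type} (G : SimpleGraph V) (q : ℕ) (g : V → Fin q) where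
  verts : Finset V
  nonempty : verts.Nonempty
  connected : (G.induce (↑verts : Set V)).Connected
  spin : V → Fin q
  spin_ne : ∀ v ∈ verts, spin v ≠ g v
  spin_ground : ∀ v ∉ verts, spin v = g v

namespace Polymer

variable {V : Type} {G : SimpleGraph V} {q : ℕ} {g : V → Fin q}

/-- The size of a polymer: its number of vertices. -/
def size (γ : Polymer G q g) : ℕ := γ.verts.card

/-- Two polymers are incompatible if their vertex sets are at graph distance at most 1. -/
def Incompat (γ γ' : Polymer G q g) : Prop :=
  ∃ u ∈ γ.verts, ∃ u' ∈ γ'.verts, u = u' ∨ G.Adj u u'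

end Polymer

set_option maxHeartbeats 1000000
set_option synthInstance.maxHeartbeats 1000000
set_option linter.unusedSectionVars false

namespace Stmt5Aux

variable {V : Type} [Fintype V] [DecidableEq V]




variable {V : Type} [Fintype V] [DecidableEq V]

noncomputable def nbrList (G : SimpleGraph V) (u : V) : List V := (G.neighborFinset u).toList

noncomputable def runS (G : SimpleGraph V) : List Bool → List ℕ → List V → Option (List V × List V × List ℕ)
  | [], cs, s => some ([], s, cs)
  | false :: _, _, [] => none
  | false :: bs, cs, _ :: s' => runS G bs cs s'
  | true :: bs, c :: cs', u :: s' =>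
      ((nbrList G u)[c]?).bind
        (fun x => (runS G bs cs' (x :: u :: s')).map (fun y => (x :: y.1, y.2)))
  | true :: _, [], _ => none
  | true :: _, _ :: _, [] => none

lemma runS_extend (G : SimpleGraph V) : ∀ (b : List Bool) (c : List ℕ) (s : List V)
    (p t : List V) (rem d : List ℕ), runS G b c s = some (p, t, rem) →
    runS G b (c ++ d) s = some (p, t, rem ++ d) := by
  intro b
  induction b with
  | nil => intro c s p t rem d h; simp [runS] at h ⊢; tauto
  | cons hd bs ih =>
    intro c s p t rem d h
    match hd, c, s with
    | false, c, [] => simp [runS] at h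
    | false, c, x :: s' => simp only [runS] at h ⊢; exact ih c s' p t rem d h
    | true, [], s => simp [runS] at h
    | true, c0 :: cs', [] => simp [runS] at h
    | true, c0 :: cs', u :: s' =>
      simp only [runS, List.cons_append] at h ⊢
      cases hx : (nbrList G u)[c0]? with
      | none => rw [hx] at h; simp at h
      | some x =>
        rw [hx] at h
        simp only [Option.bind_some, List.append_eq] at h ⊢
        cases hr : runS G bs cs' (x :: u :: s') with
        | none => rw [hr] at h; simp at h
        | some y =>
          rw [hr] at h; simp at h
          rw [ih cs' (x :: u :: s') y.1 y.2.1 y.2.2 d hr]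
          simp_all [Prod.ext_iff]

lemma runS_append (G : SimpleGraph V) : ∀ (b1 b2 : List Bool) (c : List ℕ) (s : List V),
    runS G (b1 ++ b2) c s =
      (runS G b1 c s).bind (fun x => (runS G b2 x.2.2 x.2.1).map fun y => (x.1 ++ y.1, y.2)) := by
  intro b1
  induction b1 with
  | nil =>
    intro b2 c s
    simp [runS]
  | cons hd bs ih =>
    intro b2 c s
    match hd, c, s with
    | false, c, [] => simp [runS]
    | false, c, x :: s' => simp only [List.cons_append, runS]; exact ih b2 c s'
    | true, [], s => simp [runS]
    | true, c0 :: cs', [] => simp [runS]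
    | true, c0 :: cs', u :: s' =>
      simp only [List.cons_append, runS]
      cases hx : (nbrList G u)[c0]? with
      | none => rfl
      | some x =>
        simp only [Option.bind_some, List.append_eq]
        rw [ih b2 cs' (x :: u :: s')]
        cases hr : runS G bs cs' (x :: u :: s') with
        | none => simp
        | some y =>
          cases hr2 : runS G b2 y.2.2 y.2.1 <;> simp <;> rfl




def Rel (G : SimpleGraph V) (S : Finset V) : V → V → Prop :=
  Relation.ReflTransGen (fun a b => a ∈ S ∧ b ∈ S ∧ G.Adj a b)

lemma Rel.symm {G : SimpleGraph V} {S : Finset V} {x y : V} (h : Rel G S x y) : Rel G S y x := by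
  refine @Std.Symm.symm _ _ (@Relation.ReflTransGen.stdSymm _ _ ⟨?_⟩) _ _ h
  intro a b hab
  exact ⟨hab.2.1, hab.1, hab.2.2.symm⟩

lemma rel_filter {G : SimpleGraph V} {T : Finset V} {w x : V} (h : Rel G T w x) :
    Rel G (T.filter (fun y => Rel G T w y)) w x := by
  induction h with
  | refl => exact Relation.ReflTransGen.refl
  | @tail b c h1 h2 ih =>
    refine ih.tail ⟨Finset.mem_filter.2 ⟨h2.1, h1⟩, Finset.mem_filter.2 ⟨h2.2.1, h1.tail h2⟩, h2.2.2⟩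

lemma rel_avoid {G : SimpleGraph V} {S : Finset V} {u w : V}
    (C : Finset V) (hC : C = (S.erase u).filter (fun y => Rel G (S.erase u) w y))
    {x : V} (hchain : Rel G S x u) (hx : x ∈ S \ C) : Rel G (S \ C) x u := by
  induction hchain using Relation.ReflTransGen.head_induction_on with
  | refl => exact Relation.ReflTransGen.refl
  | @head a c h' hrest ih =>
    rcases eq_or_ne a u with rfl | hau
    · exact Relation.ReflTransGen.refl
    · have haS : a ∈ S := h'.1
      have haT : a ∈ S.erase u := Finset.mem_erase.2 ⟨hau, haS⟩
      have haC : a ∉ C := (Finset.mem_sdiff.1 hx).2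
      by_cases hcC : c ∈ C
      · exfalso
        apply haC
        rw [hC] at hcC ⊢
        have hcT : c ∈ S.erase u := (Finset.mem_filter.1 hcC).1
        have hrel : Rel G (S.erase u) w c := (Finset.mem_filter.1 hcC).2
        exact Finset.mem_filter.2 ⟨haT, hrel.tail ⟨hcT, haT, h'.2.2.symm⟩⟩
      · have hcD : c ∈ S \ C := Finset.mem_sdiff.2 ⟨h'.2.1, hcC⟩
        exact Relation.ReflTransGen.head ⟨hx, hcD, h'.2.2⟩ (ih hcD)


lemma conn_rel {G : SimpleGraph V} {S : Finset V} (h : (G.induce (↑S : Set V)).Connected) :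
    ∀ x ∈ S, ∀ y ∈ S, Rel G S x y := by
  intro x hx y hy
  obtain ⟨wlk⟩ := h.preconnected ⟨x, by exact hx⟩ ⟨y, by exact hy⟩
  have key : ∀ (a b : (↑S : Set V)) (_ : (G.induce (↑S : Set V)).Walk a b), Rel G S a.1 b.1 := by
    intro a b w
    induction w with
    | nil => exact Relation.ReflTransGen.refl
    | cons hadj _ ih =>
      refine Relation.ReflTransGen.head ?_ ih
      rename_i u' v' _ _
      exact ⟨u'.2, v'.2, hadj⟩
  exact key _ _ wlk

lemma exists_prog (G : SimpleGraph V) (Δ : ℕ) (hdeg : ∀ v : V, G.degree v ≤ Δ) :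
    ∀ (k : ℕ) (S : Finset V), S.card = k → (∀ x ∈ S, ∀ y ∈ S, Rel G S x y) →
    ∀ u ∈ S, ∀ s : List V,
    ∃ (b : List Bool) (c : List ℕ) (p : List V),
      b.length = 2 * (k - 1) ∧ c.length = k - 1 ∧ (∀ i ∈ c, i < Δ) ∧
      runS G b c (u :: s) = some (p, u :: s, []) ∧ p.toFinset = S.erase u ∧
      p.length = k - 1 := by
  intro k
  induction k using Nat.strong_induction_on with
  | _ k IH =>
  intro S hcard hconn u hu s
  rcases Nat.lt_or_ge k 2 with hk2 | hk2
  · -- k = 0 or 1 ; since u ∈ S, k = 1 and S = {u}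
    have hk1 : k = 1 := by
      have : 0 < S.card := Finset.card_pos.2 ⟨u, hu⟩
      omega
    refine ⟨[], [], [], by simp [hk1], by simp [hk1], by simp, by simp [runS], ?_, by simp [hk1]⟩
    have : S = {u} := by
      apply Finset.eq_singleton_iff_unique_mem.2
      refine ⟨hu, fun y hy => ?_⟩
      by_contra hne
      have : 2 ≤ S.card := Finset.one_lt_card.2 ⟨y, hy, u, hu, hne⟩
      omega
    simp [this]
  · -- k ≥ 2
    obtain ⟨y, hy, hyu⟩ : ∃ y ∈ S, y ≠ u := by
      apply Finset.exists_mem_ne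
      omega
    have hRuy := hconn u hu y hy
    obtain ⟨w, hw, -⟩ : ∃ w, (u ∈ S ∧ w ∈ S ∧ G.Adj u w) ∧
        Relation.ReflTransGen _ w y := by
      rcases hRuy.cases_head with heq | ⟨w, hw1, hw2⟩
      · exact absurd heq.symm hyu
      · exact ⟨w, hw1, hw2⟩
    obtain ⟨-, hwS, hadj⟩ := hw
    have hwu : w ≠ u := fun h => G.irrefl (h ▸ hadj)
    set T := S.erase u with hT
    set C := T.filter (fun x => Rel G T w x) with hC
    have hwT : w ∈ T := Finset.mem_erase.2 ⟨hwu, hwS⟩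
    have hwC : w ∈ C := Finset.mem_filter.2 ⟨hwT, Relation.ReflTransGen.refl⟩
    have hCT : C ⊆ T := Finset.filter_subset _ _
    have hCS : C ⊆ S := hCT.trans (Finset.erase_subset _ _)
    have huC : u ∉ C := fun h => (Finset.mem_erase.1 (hCT h)).1 rfl
    set D := S \ C with hD
    have huD : u ∈ D := Finset.mem_sdiff.2 ⟨hu, huC⟩
    -- connectivity of C
    have hconnC : ∀ x ∈ C, ∀ y ∈ C, Rel G C x y := by
      intro x hx y hy
      have hx' := (Finset.mem_filter.1 hx).2
      have hy' := (Finset.mem_filter.1 hy).2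
      exact Relation.ReflTransGen.trans (Rel.symm (rel_filter hx')) (rel_filter hy')
    -- connectivity of D
    have hDu : ∀ x ∈ D, Rel G D x u := by
      intro x hx
      exact rel_avoid C rfl (hconn x (Finset.mem_sdiff.1 hx).1 u hu) hx
    have hconnD : ∀ x ∈ D, ∀ y ∈ D, Rel G D x y := by
      intro x hx y hy
      exact Relation.ReflTransGen.trans (hDu x hx) (Rel.symm (hDu y hy))
    -- cards
    have hsum : D.card + C.card = k := by rw [hD, ← hcard]; exact Finset.card_sdiff_add_card_eq_card hCS
    have hCpos : 0 < C.card := Finset.card_pos.2 ⟨w, hwC⟩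
    have hDpos : 0 < D.card := Finset.card_pos.2 ⟨u, huD⟩
    have hClt : C.card < k := by omega
    have hDlt : D.card < k := by omega
    obtain ⟨bC, cC, pC, hbCl, hcCl, hcCΔ, hrunC, hpCfin, hpCl⟩ :=
      IH C.card hClt C rfl hconnC w hwC (u :: s)
    obtain ⟨bD, cD, pD, hbDl, hcDl, hcDΔ, hrunD, hpDfin, hpDl⟩ :=
      IH D.card hDlt D rfl hconnD u huD s
    -- the index of w among the neighbours of u
    have hwN : w ∈ nbrList G u := by
      rw [nbrList, Finset.mem_toList, SimpleGraph.mem_neighborFinset]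
      exact hadj
    have hidx : (nbrList G u)[List.idxOf w (nbrList G u)]? = some w :=
      List.getElem?_idxOf hwN
    have hidxΔ : List.idxOf w (nbrList G u) < Δ := by
      have h1 : List.idxOf w (nbrList G u) < (nbrList G u).length :=
        List.idxOf_lt_length_iff.2 hwN
      have h2 : (nbrList G u).length = G.degree u := by
        rw [nbrList, Finset.length_toList]; rfl
      have := hdeg u
      omega
    refine ⟨true :: (bC ++ (false :: bD)), List.idxOf w (nbrList G u) :: (cC ++ cD),
      w :: (pC ++ pD), ?_, ?_, ?_, ?_, ?_, ?_⟩
    · simp only [List.length_cons, List.length_append]; omega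
    · simp only [List.length_cons, List.length_append]; omega
    · intro i hi
      rcases List.mem_cons.1 hi with rfl | hi'
      · exact hidxΔ
      · rcases List.mem_append.1 hi' with h | h
        · exact hcCΔ i h
        · exact hcDΔ i h
    · -- the run computation
      show runS G (true :: (bC ++ (false :: bD))) _ (u :: s) = _
      rw [show runS G (true :: (bC ++ (false :: bD)))
          (List.idxOf w (nbrList G u) :: (cC ++ cD)) (u :: s) =
          ((nbrList G u)[List.idxOf w (nbrList G u)]?).bind
            (fun x => (runS G (bC ++ (false :: bD)) (cC ++ cD) (x :: u :: s)).map
              (fun y => (x :: y.1, y.2))) from rfl]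
      rw [hidx, Option.bind_some]
      rw [runS_append G bC (false :: bD) (cC ++ cD) (w :: u :: s)]
      rw [runS_extend G bC cC (w :: u :: s) pC (w :: u :: s) [] cD hrunC]
      simp only [Option.bind_some, List.nil_append]
      rw [show runS G (false :: bD) cD (w :: u :: s) = runS G bD cD (u :: s) from rfl]
      rw [hrunD]
      rfl
    · -- the Finset identity
      have heq : (w :: (pC ++ pD)).toFinset = insert w (C.erase w ∪ D.erase u) := by
        rw [List.toFinset_cons, List.toFinset_append, hpCfin, hpDfin]
      rw [heq]
      ext x
      rw [Finset.mem_insert, Finset.mem_union, Finset.mem_erase, Finset.mem_erase,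
        Finset.mem_erase]
      constructor
      · rintro (rfl | ⟨hxw, hxC⟩ | ⟨hxu, hxD⟩)
        · exact ⟨hwu, hwS⟩
        · exact ⟨(Finset.mem_erase.1 (hCT hxC)).1, hCS hxC⟩
        · exact ⟨hxu, (Finset.mem_sdiff.1 hxD).1⟩
      · rintro ⟨hxu, hxS⟩
        by_cases hxC : x ∈ C
        · rcases eq_or_ne x w with rfl | hxw
          · exact Or.inl rfl
          · exact Or.inr (Or.inl ⟨hxw, hxC⟩)
        · exact Or.inr (Or.inr ⟨hxu, Finset.mem_sdiff.2 ⟨hxS, hxC⟩⟩)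
    · simp only [List.length_cons, List.length_append]; omega


def encSpin (q : ℕ) (gv sv : Fin q) : ℕ := if sv.val < gv.val then sv.val else sv.val - 1

lemma encSpin_lt {q : ℕ} (hq : 2 ≤ q) (gv sv : Fin q) : encSpin q gv sv < q - 1 := by
  have h1 := gv.2
  have h2 := sv.2
  unfold encSpin
  split_ifs <;> omega

lemma encSpin_inj {q : ℕ} {gv sv sv' : Fin q} (h : sv ≠ gv) (h' : sv' ≠ gv)
    (he : encSpin q gv sv = encSpin q gv sv') : sv = sv' := by
  have h1 : sv.val ≠ gv.val := fun hc => h (Fin.ext hc)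
  have h2 : sv'.val ≠ gv.val := fun hc => h' (Fin.ext hc)
  apply Fin.ext
  unfold encSpin at he
  split_ifs at he <;> omega

lemma list_eq_of_getD {α : Type*} (d : α) (l l' : List α) (m : ℕ)
    (h1 : l.length = m) (h2 : l'.length = m)
    (h : ∀ i : Fin m, l.getD i d = l'.getD i d) : l = l' := by
  apply List.ext_getElem (by omega)
  intro i hi hi'
  have := h ⟨i, by omega⟩
  rwa [List.getD_eq_getElem _ _ (by omega), List.getD_eq_getElem _ _ (by omega)] at this

lemma polymer_eq {q : ℕ} {G : SimpleGraph V} {g : V → Fin q} {γ γ' : Polymer G q g}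
    (h1 : γ.verts = γ'.verts) (h2 : γ.spin = γ'.spin) : γ = γ' := by
  cases γ; cases γ'
  simp only at h1 h2
  subst h1; subst h2
  rfl

lemma fiber_card (G : SimpleGraph V) (q Δ : ℕ) (hq : 2 ≤ q) (hΔ : 3 ≤ Δ)
    (hdeg : ∀ v : V, G.degree v ≤ Δ) (g : V → Fin q) (C : Finset (Polymer G q g))
    (v : V) (k : ℕ) (hk : 1 ≤ k) :
    (C.filter (fun γ => v ∈ γ.verts ∧ γ.size = k)).card ≤
      2 ^ (2 * (k - 1)) * Δ ^ (k - 1) * (q - 1) ^ k := by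
  classical
  set fib := C.filter (fun γ => v ∈ γ.verts ∧ γ.size = k) with hfib
  have H : ∀ γ : Polymer G q g, ∃ (b : List Bool) (c : List ℕ) (p : List V),
      γ ∈ fib → (b.length = 2 * (k - 1) ∧ c.length = k - 1 ∧ (∀ i ∈ c, i < Δ) ∧
        runS G b c (v :: []) = some (p, v :: [], []) ∧ p.toFinset = γ.verts.erase v ∧
        p.length = k - 1) := by
    intro γ
    by_cases hγ : γ ∈ fib
    · have hmem := Finset.mem_filter.1 hγ
      obtain ⟨hvγ, hsz⟩ := hmem.2
      obtain ⟨b, c, p, h⟩ := exists_prog G Δ hdeg k γ.verts hsz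
        (conn_rel γ.connected) v hvγ []
      exact ⟨b, c, p, fun _ => h⟩
    · exact ⟨[], [], [], fun h => absurd h hγ⟩
  choose bf cf pf hprop using H
  set Φ : Polymer G q g → (Fin (2 * (k - 1)) → Bool) × (Fin (k - 1) → Fin Δ) × (Fin k → Fin (q - 1)) :=
    fun γ => (fun i => (bf γ).getD i false,
      fun i => ⟨min ((cf γ).getD i 0) (Δ - 1), by omega⟩,
      fun i => ⟨encSpin q (g ((γ.verts.toList).getD i v)) (γ.spin ((γ.verts.toList).getD i v)),
        encSpin_lt hq _ _⟩) with hΦ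
  have hinj : Set.InjOn Φ fib := by
    intro γ hγ γ' hγ' heq
    have hp := hprop γ hγ
    have hp' := hprop γ' hγ'
    obtain ⟨hb, hc, hcΔ, hrun, hfin, hpl⟩ := hp
    obtain ⟨hb', hc', hcΔ', hrun', hfin', hpl'⟩ := hp'
    have heq1 : ∀ i : Fin (2 * (k - 1)), (bf γ).getD i false = (bf γ').getD i false := by
      intro i; exact congrFun (congrArg Prod.fst heq) i
    have hbeq : bf γ = bf γ' := list_eq_of_getD false _ _ _ hb hb' heq1
    have hceq : cf γ = cf γ' := by
      apply list_eq_of_getD 0 _ _ (k - 1) hc hc'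
      intro i
      have h2 : ((Φ γ).2.1 i).val = ((Φ γ').2.1 i).val := by rw [heq]
      simp only [hΦ] at h2
      have e1 : (cf γ).getD i 0 < Δ := by
        have hh : (cf γ).getD i 0 = (cf γ)[(i : ℕ)]'(by omega) :=
          List.getD_eq_getElem _ _ (by omega)
        rw [hh]; exact hcΔ _ (List.getElem_mem _)
      have e2 : (cf γ').getD i 0 < Δ := by
        have hh : (cf γ').getD i 0 = (cf γ')[(i : ℕ)]'(by omega) :=
          List.getD_eq_getElem _ _ (by omega)
        rw [hh]; exact hcΔ' _ (List.getElem_mem _)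
      omega
    have hpeq : pf γ = pf γ' := by
      rw [hbeq, hceq] at hrun
      have hh := hrun.symm.trans hrun'
      simp only [Option.some.injEq, Prod.mk.injEq] at hh
      exact hh.1
    have hvmem : v ∈ γ.verts := (Finset.mem_filter.1 hγ).2.1
    have hvmem' : v ∈ γ'.verts := (Finset.mem_filter.1 hγ').2.1
    have hverts : γ.verts = γ'.verts := by
      rw [← Finset.insert_erase hvmem, ← Finset.insert_erase hvmem', ← hfin, ← hfin', hpeq]
    have hlen : γ.verts.toList.length = k := by
      rw [Finset.length_toList]; exact (Finset.mem_filter.1 hγ).2.2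
    have hspin : γ.spin = γ'.spin := by
      funext x
      by_cases hx : x ∈ γ.verts
      · have hx' : x ∈ γ.verts.toList := Finset.mem_toList.2 hx
        set i := γ.verts.toList.idxOf x with hi
        have hilt : i < k := by
          rw [← hlen]; exact List.idxOf_lt_length_iff.2 hx'
        have hgx : (γ.verts.toList).getD i v = x := by
          rw [List.getD_eq_getElem _ _ (by omega)]
          exact List.getElem_idxOf _
        have hgx' : (γ'.verts.toList).getD i v = x := by rw [← hverts]; exact hgx
        have h3 : ((Φ γ).2.2 ⟨i, hilt⟩).val = ((Φ γ').2.2 ⟨i, hilt⟩).val := by rw [heq]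
        simp only [hΦ] at h3
        rw [hgx, hgx'] at h3
        exact encSpin_inj (γ.spin_ne x hx) (γ'.spin_ne x (hverts ▸ hx)) h3
      · rw [γ.spin_ground x hx, γ'.spin_ground x (hverts ▸ hx)]
    exact polymer_eq hverts hspin
  calc fib.card ≤ (Finset.univ : Finset ((Fin (2 * (k - 1)) → Bool) × (Fin (k - 1) → Fin Δ) × (Fin k → Fin (q - 1)))).card := by
        apply Finset.card_le_card_of_injOn Φ (fun a _ => Finset.mem_univ _) hinj
    _ = 2 ^ (2 * (k - 1)) * Δ ^ (k - 1) * (q - 1) ^ k := by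
        rw [Finset.card_univ]
        simp [Fintype.card_fun, mul_assoc]

end Stmt5Aux

set_option maxHeartbeats 1000000 in
set_option synthInstance.maxHeartbeats 1000000 in
/-- under the polymer sampling condition with constant
`τ ≥ 5 + 3 log((q-1)Δ)`, setting `r = τ - 2 - log((q-1)Δ)`, for every vertex `v`
the sum `∑_{γ ∋ v} w_γ e^{r|γ|}` is strictly less than `1`. -/
theorem stmt_5 {V : Type} [Fintype V] [DecidableEq V] (G : SimpleGraph V) (q Δ : ℕ)
    (hq : 2 ≤ q) (hΔ : 3 ≤ Δ) (hdeg : ∀ v : V, G.degree v ≤ Δ)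
    (g : V → Fin q) (C : Finset (Polymer G q g)) (w : Polymer G q g → ℝ)
    (hw : ∀ γ ∈ C, 0 ≤ w γ) (τ : ℝ)
    (hτ : 5 + 3 * Real.log (((q : ℝ) - 1) * Δ) ≤ τ)
    (hsamp : ∀ γ ∈ C, w γ ≤ Real.exp (-τ * γ.size))
    (r : ℝ) (hr : r = τ - 2 - Real.log (((q : ℝ) - 1) * Δ)) :
    ∀ v : V, ∑ γ ∈ C.filter (fun γ => v ∈ γ.verts),
        w γ * Real.exp (r * γ.size) < 1 := by
  intro v
  classical
  set n := Fintype.card V with hn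
  set L := Real.log (((q : ℝ) - 1) * Δ) with hL
  set ρ := 4 * Real.exp (-2) with hρ
  have hA : (1 : ℝ) ≤ (q : ℝ) - 1 := by
    have : (2 : ℝ) ≤ (q : ℝ) := by exact_mod_cast hq
    linarith
  have hApos : (0 : ℝ) < (q : ℝ) - 1 := by linarith
  have hΔpos : (0 : ℝ) < (Δ : ℝ) := by positivity
  have hexpL : Real.exp L = ((q : ℝ) - 1) * Δ := Real.exp_log (by positivity)
  have hexp1 : (2.7182818283 : ℝ) < Real.exp 1 := Real.exp_one_gt_d9
  have hexp2 : (7 : ℝ) < Real.exp 2 := by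
    have h2 : Real.exp 2 = Real.exp 1 * Real.exp 1 := by
      rw [← Real.exp_add]; norm_num
    nlinarith
  have hρ0 : (0 : ℝ) ≤ ρ := by positivity
  have hρ47 : ρ < 4 / 7 := by
    rw [hρ, Real.exp_neg, show (4 : ℝ) * (Real.exp 2)⁻¹ = 4 / Real.exp 2 by ring]
    apply div_lt_div_of_pos_left (by norm_num) (by norm_num) hexp2
  have hρ1 : ρ < 1 := by linarith
  have hmaps : ∀ γ ∈ C.filter (fun γ => v ∈ γ.verts), γ.size ∈ Finset.range (n + 1) := by
    intro γ _
    rw [Finset.mem_range]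
    have := Finset.card_le_univ γ.verts
    rw [Polymer.size]
    omega
  rw [← Finset.sum_fiberwise_of_maps_to hmaps (fun γ => w γ * Real.exp (r * γ.size))]
  have hfiber : ∀ k ∈ Finset.range (n + 1),
      ∑ γ ∈ (C.filter (fun γ => v ∈ γ.verts)).filter (fun γ => γ.size = k),
        w γ * Real.exp (r * γ.size) ≤ (1 / (4 * Δ)) * ρ ^ k := by
    intro k _
    have hfil : (C.filter (fun γ => v ∈ γ.verts)).filter (fun γ => γ.size = k) =
        C.filter (fun γ => v ∈ γ.verts ∧ γ.size = k) := by
      rw [Finset.filter_filter]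
    rw [hfil]
    rcases Nat.eq_zero_or_pos k with rfl | hk1
    · have hempty : C.filter (fun γ => v ∈ γ.verts ∧ γ.size = 0) = ∅ := by
        apply Finset.filter_false_of_mem
        intro γ _
        rintro ⟨-, hsz⟩
        have := Finset.card_pos.2 γ.nonempty
        rw [Polymer.size] at hsz
        omega
      rw [hempty, Finset.sum_empty]
      positivity
    · have hterm : ∀ γ ∈ C.filter (fun γ => v ∈ γ.verts ∧ γ.size = k),
          w γ * Real.exp (r * (γ.size : ℝ)) ≤ Real.exp (-(2 + L) * k) := by
        intro γ hγ
        have hm := Finset.mem_filter.1 hγ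
        have h1 : w γ ≤ Real.exp (-τ * γ.size) := hsamp γ hm.1
        have hle : w γ * Real.exp (r * γ.size) ≤
            Real.exp (-τ * γ.size) * Real.exp (r * γ.size) :=
          mul_le_mul_of_nonneg_right h1 (Real.exp_pos _).le
        refine hle.trans (le_of_eq ?_)
        rw [← Real.exp_add, hm.2.2]
        congr 1
        rw [hr]; ring
      have hcard := Stmt5Aux.fiber_card G q Δ hq hΔ hdeg g C v k hk1
      obtain ⟨m, rfl⟩ : ∃ m, k = m + 1 := ⟨k - 1, by omega⟩
      have hexpk : Real.exp (-(2 + L) * ((m + 1 : ℕ) : ℝ)) =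
          (Real.exp (-2) * ((((q : ℝ) - 1) * Δ))⁻¹) ^ (m + 1) := by
        rw [show (-(2 + L) * ((m + 1 : ℕ) : ℝ)) = ((m + 1 : ℕ) : ℝ) * (-2 + -L) by ring]
        rw [Real.exp_nat_mul, Real.exp_add,
          show Real.exp (-L) = ((((q : ℝ) - 1)) * Δ)⁻¹ by rw [Real.exp_neg, hexpL]]
      calc ∑ γ ∈ C.filter (fun γ => v ∈ γ.verts ∧ γ.size = m + 1),
            w γ * Real.exp (r * (γ.size : ℝ))
          ≤ (C.filter (fun γ => v ∈ γ.verts ∧ γ.size = m + 1)).card •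
            Real.exp (-(2 + L) * ((m + 1 : ℕ) : ℝ)) :=
            Finset.sum_le_card_nsmul _ _ _ hterm
        _ = ((C.filter (fun γ => v ∈ γ.verts ∧ γ.size = m + 1)).card : ℝ) *
            Real.exp (-(2 + L) * ((m + 1 : ℕ) : ℝ)) := nsmul_eq_mul _ _
        _ ≤ ((2 ^ (2 * ((m + 1) - 1)) * Δ ^ ((m + 1) - 1) * (q - 1) ^ (m + 1) : ℕ) : ℝ) *
            Real.exp (-(2 + L) * ((m + 1 : ℕ) : ℝ)) := by
            apply mul_le_mul_of_nonneg_right _ (Real.exp_pos _).le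
            exact_mod_cast hcard
        _ = (1 / (4 * Δ)) * ρ ^ (m + 1) := by
            rw [hexpk]
            have hcast : (((q - 1 : ℕ)) : ℝ) = (q : ℝ) - 1 := by
              have : (1 : ℕ) ≤ q := by omega
              push_cast [this]
              ring
            push_cast [hcast]
            rw [hρ]
            have h4m : (2 : ℝ) ^ (2 * m) = 4 ^ m := by rw [pow_mul]; norm_num
            rw [h4m, mul_pow (Real.exp (-2)), mul_pow (4 : ℝ), mul_inv, mul_pow (((q : ℝ) - 1)⁻¹),
              inv_pow, inv_pow, pow_succ ((q : ℝ) - 1), pow_succ (Real.exp (-2)),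
              pow_succ (4 : ℝ)]
            field_simp
            ring
      done
  calc ∑ k ∈ Finset.range (n + 1), ∑ γ ∈ (C.filter (fun γ => v ∈ γ.verts)).filter
        (fun γ => γ.size = k), w γ * Real.exp (r * γ.size)
      ≤ ∑ k ∈ Finset.range (n + 1), (1 / (4 * Δ)) * ρ ^ k := Finset.sum_le_sum hfiber
    _ = (1 / (4 * Δ)) * ∑ k ∈ Finset.range (n + 1), ρ ^ k := by rw [Finset.mul_sum]
    _ < 1 := by
        have h1ρ : (0 : ℝ) < 1 - ρ := by linarith
        have hgeom : ∑ k ∈ Finset.range (n + 1), ρ ^ k ≤ (1 - ρ)⁻¹ := by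
          rw [geom_sum_eq hρ1.ne]
          rw [show (ρ ^ (n + 1) - 1) / (ρ - 1) = (1 - ρ ^ (n + 1)) / (1 - ρ) by
            rw [div_eq_div_iff (by linarith) (by linarith)]; ring]
          rw [inv_eq_one_div]
          exact (div_le_div_iff_of_pos_right h1ρ).2 (by nlinarith [pow_nonneg hρ0 (n + 1)])
        have hIle : (1 - ρ)⁻¹ ≤ 7 / 3 := by
          rw [inv_eq_one_div, div_le_iff₀ h1ρ]
          linarith
        have hΔ12 : (12 : ℝ) ≤ 4 * Δ := by
          have h3 : (3 : ℝ) ≤ (Δ : ℝ) := by exact_mod_cast hΔ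
          linarith
        have h14 : 1 / (4 * (Δ : ℝ)) ≤ 1 / 12 := one_div_le_one_div_of_le (by norm_num) hΔ12
        have hsum0 : (0 : ℝ) ≤ ∑ k ∈ Finset.range (n + 1), ρ ^ k := by positivity
        calc (1 / (4 * (Δ : ℝ))) * ∑ k ∈ Finset.range (n + 1), ρ ^ k
            ≤ (1 / 12) * (7 / 3) :=
              mul_le_mul h14 (hgeom.trans hIle) hsum0 (by norm_num)
          _ < 1 := by norm_num
  done
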